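/- With the unary-encoded bit string B of a nondecreasing positive weight sequence weight(v₁) ≤ ⋯ ≤ weight(v_ℓ), for any k with 1 ≤ k ≤ weight(v_ℓ): letting j = select₁(B, k) (the position of the k-th one in B) and f = rank₀(B, j) (the number of zeros in B[1..j]), the node v_{f+1} is the first node in the sequence with weight(v_{f+1}) ≥ k; that is, weight(v_{f+1}) ≥ k and either f = 0 or weight(v_f) < k. -/

import Mathlib

/-- Unary code of `m`: `m` ones followed by a single zero (`true` = 1, `false` = 0). -/
def enc (m : ℕ) : List Bool := List.replicate m true ++ [false]

/-- The unary difference encoding `B = enc(w₁)·enc(w₂−w₁)⋯enc(w_ℓ−w_{ℓ−1})`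
of a weight sequence `w 1, …, w ℓ` (with the convention `w 0 = 0`). -/
def encB (w : ℕ → ℕ) (ℓ : ℕ) : List Bool :=
  (List.range ℓ).flatMap fun i => enc (w (i + 1) - w i)

/-- `rank B b p`: number of bits equal to `b` among the first `p` bits of `B` (1-indexed positions). -/
def rank (B : List Bool) (b : Bool) (p : ℕ) : ℕ := (B.take p).count b

/-- `select B b k`: the (1-indexed) position of the `k`-th occurrence of bit `b` in `B`,
i.e. the least `p` with `rank B b p = k`. -/
def select (B : List Bool) (b : Bool) (k : ℕ) : ℕ :=
  (((List.range (B.length + 1)).filter fun p => rank B b p == k).head?).getD 0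

lemma encB_succ (w : ℕ → ℕ) (t : ℕ) :
    encB w (t + 1) = encB w t ++ enc (w (t + 1) - w t) := by
  simp [encB, List.range_succ]

lemma enc_count_true (m : ℕ) : (enc m).count true = m := by
  simp [enc, List.count_append]

lemma enc_count_false (m : ℕ) : (enc m).count false = 1 := by
  simp [enc, List.count_append, List.count_replicate]

lemma encB_count_true (w : ℕ → ℕ) (h0 : w 0 = 0) {ℓ : ℕ}
    (hmono : ∀ i < ℓ, w i ≤ w (i + 1)) :
    ∀ t, t ≤ ℓ → (encB w t).count true = w t := by
  intro t
  induction t with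
  | zero => intro _; simp [encB, h0]
  | succ n ih =>
    intro h
    rw [encB_succ, List.count_append, ih (by omega), enc_count_true]
    have := hmono n (by omega)
    omega

lemma encB_count_false (w : ℕ → ℕ) {ℓ : ℕ} :
    ∀ t, t ≤ ℓ → (encB w t).count false = t := by
  intro t
  induction t with
  | zero => intro _; simp [encB]
  | succ n ih =>
    intro h
    rw [encB_succ, List.count_append, ih (by omega), enc_count_false]

lemma encB_length (w : ℕ → ℕ) (h0 : w 0 = 0) {ℓ : ℕ}
    (hmono : ∀ i < ℓ, w i ≤ w (i + 1)) :
    ∀ t, t ≤ ℓ → (encB w t).length = w t + t := by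
  intro t
  induction t with
  | zero => intro _; simp [encB, h0]
  | succ n ih =>
    intro h
    rw [encB_succ, List.length_append, ih (by omega)]
    have := hmono n (by omega)
    simp [enc]
    omega

lemma encB_split (w : ℕ → ℕ) {t ℓ : ℕ} (h : t ≤ ℓ) :
    ∃ D, encB w ℓ = encB w t ++ D := by
  induction ℓ with
  | zero =>
    have : t = 0 := by omega
    exact ⟨[], by simp [this]⟩
  | succ n ih =>
    rcases Nat.lt_or_ge t (n + 1) with h' | h'
    · obtain ⟨D, hD⟩ := ih (by omega)
      exact ⟨D ++ enc (w (n + 1) - w n), by rw [encB_succ, hD, List.append_assoc]⟩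
    · have : t = n + 1 := by omega
      exact ⟨[], by simp [this]⟩

lemma take_encB (w : ℕ → ℕ) (h0 : w 0 = 0) {ℓ : ℕ}
    (hmono : ∀ i < ℓ, w i ≤ w (i + 1)) {f : ℕ} (hf : f < ℓ)
    {m : ℕ} (hm1 : w f ≤ m) (hm2 : m ≤ w (f + 1)) :
    (encB w ℓ).take (f + m) = encB w f ++ List.replicate (m - w f) true := by
  obtain ⟨D, hD⟩ := encB_split w (show f + 1 ≤ ℓ by omega)
  have hlen : (encB w f).length = w f + f := encB_length w h0 hmono f (by omega)
  rw [hD, encB_succ, List.append_assoc,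
      show f + m = (encB w f).length + (m - w f) by omega, List.take_length_add_append]
  congr 1
  unfold enc
  rw [List.append_assoc, List.take_append_of_le_length (by simp; omega),
      List.take_replicate]
  congr 1
  omega

lemma head_filter_range {n q : ℕ} {pred : ℕ → Bool} (hq : q < n) (h1 : pred q = true)
    (h2 : ∀ p < q, pred p = false) :
    (((List.range n).filter pred).head?) = some q := by
  obtain ⟨u, rfl⟩ : ∃ u, n = (q + 1) + u := ⟨n - (q + 1), by omega⟩
  rw [List.range_add, List.filter_append]
  have hq1 : (List.range (q + 1)).filter pred = [q] := by
    rw [List.range_succ, List.filter_append]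
    have : (List.range q).filter pred = [] := by
      apply List.filter_eq_nil_iff.mpr
      intro a ha
      simp [h2 a (List.mem_range.mp ha)]
    simp [this, h1]
  rw [hq1]
  rfl

/-- for 1 ≤ k ≤ w ℓ, with j = select₁(B,k) and f = rank₀(B,j), the node
v_{f+1} is the first node with weight ≥ k: w (f+1) ≥ k and either f = 0 or w f < k. -/
theorem stmt6 (w : ℕ → ℕ) (ℓ : ℕ) (h0 : w 0 = 0)
    (hmono : ∀ i < ℓ, w i ≤ w (i + 1))
    (hpos : ∀ i, 1 ≤ i → i ≤ ℓ → 1 ≤ w i)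
    (hl : 1 ≤ ℓ) (k : ℕ) (hk1 : 1 ≤ k) (hk2 : k ≤ w ℓ) :
    k ≤ w (rank (encB w ℓ) false (select (encB w ℓ) true k) + 1) ∧
    (rank (encB w ℓ) false (select (encB w ℓ) true k) = 0 ∨
      w (rank (encB w ℓ) false (select (encB w ℓ) true k)) < k) := by
  set B := encB w ℓ with hB
  have hex : ∃ n, k ≤ w (n + 1) := ⟨ℓ - 1, by rwa [show ℓ - 1 + 1 = ℓ by omega]⟩
  set f := Nat.find hex with hfdef
  have hfspec : k ≤ w (f + 1) := Nat.find_spec hex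
  have hfle : f ≤ ℓ - 1 := Nat.find_min' hex (by rwa [show ℓ - 1 + 1 = ℓ by omega])
  have hflt : f < ℓ := by omega
  have hwf : w f < k := by
    rcases Nat.eq_zero_or_pos f with h | h
    · rw [h, h0]; omega
    · have := Nat.find_min hex (show f - 1 < f by omega)
      rw [show f - 1 + 1 = f by omega] at this
      omega
  have hBlen : B.length = w ℓ + ℓ := encB_length w h0 hmono ℓ le_rfl
  -- the take at position f + k
  have htake : B.take (f + k) = encB w f ++ List.replicate (k - w f) true :=
    take_encB w h0 hmono hflt (by omega) hfspec
  -- rank true at f + k is k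
  have hrt : rank B true (f + k) = k := by
    rw [rank, htake, List.count_append, encB_count_true w h0 hmono f (by omega)]
    simp
    omega
  -- rank false at f + k is f
  have hrf : rank B false (f + k) = f := by
    rw [rank, htake, List.count_append, encB_count_false w (ℓ := ℓ) f (by omega)]
    simp [List.count_replicate]
  -- rank true at f + k - 1 is k - 1
  have htake' : B.take (f + (k - 1)) = encB w f ++ List.replicate ((k - 1) - w f) true :=
    take_encB w h0 hmono hflt (by omega) (by omega)
  have hrt' : rank B true (f + (k - 1)) = k - 1 := by
    rw [rank, htake', List.count_append, encB_count_true w h0 hmono f (by omega)]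
    simp
    omega
  -- rank true is monotone in position
  have hrmono : ∀ p q : ℕ, p ≤ q → rank B true p ≤ rank B true q := by
    intro p q hpq
    have : B.take p = (B.take q).take p := by
      rw [List.take_take, min_eq_left hpq]
    rw [rank, rank, this]
    exact (List.take_sublist p (B.take q)).count_le true
  have hlt : ∀ p < f + k, rank B true p ≠ k := by
    intro p hp
    have : rank B true p ≤ k - 1 := hrt' ▸ hrmono p (f + (k - 1)) (by omega)
    omega
  have hqn : f + k < B.length + 1 := by omega
  have hsel : select B true k = f + k := by
    rw [select, head_filter_range hqn (by simp [hrt]) (fun p hp => by simp [hlt p hp])]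
    rfl
  rw [hsel, hrf]
  exact ⟨hfspec, by omega⟩
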